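/- One-step SGD distance recursion: let f : ℝ^d → ℝ be differentiable and μ-strongly convex with minimizer x*, let x ∈ ℝ^d, γ > 0, and let g be a square-integrable random vector with E[g] = ∇f(x) and E‖g‖² ≤ 2A(f(x) − f(x*)) + D. Then E‖x − γg − x*‖² ≤ (1 − γμ)‖x − x*‖² − 2γ(1 − Aγ)(f(x) − f(x*)) + Dγ². -/
import Mathlib


open MeasureTheory RealInnerProductSpace

theorem sgd_one_step_recursion {Ω : Type*} [MeasurableSpace Ω] (P : Measure Ω)
    [IsProbabilityMeasure P] {d : ℕ} (f : EuclideanSpace ℝ (Fin d) → ℝ) (μ A D γ : ℝ)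
    (hf : Differentiable ℝ f)
    (hsc : ∀ x y, f y ≥ f x + ⟪gradient f x, y - x⟫ + μ / 2 * ‖y - x‖ ^ 2)
    (xstar : EuclideanSpace ℝ (Fin d)) (hxstar : ∀ y, f xstar ≤ f y)
    (x : EuclideanSpace ℝ (Fin d)) (hγ : 0 < γ) (hA : 0 ≤ A) (hD : 0 ≤ D)
    (g : Ω → EuclideanSpace ℝ (Fin d))
    (hint : Integrable g P) (hint2 : Integrable (fun ω => ‖g ω‖ ^ 2) P)
    (hmean : ∫ ω, g ω ∂P = gradient f x)
    (hsecond : ∫ ω, ‖g ω‖ ^ 2 ∂P ≤ 2 * A * (f x - f xstar) + D) :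
    ∫ ω, ‖x - γ • g ω - xstar‖ ^ 2 ∂P ≤
      (1 - γ * μ) * ‖x - xstar‖ ^ 2 - 2 * γ * (1 - A * γ) * (f x - f xstar) + D * γ ^ 2 := by
  set v := x - xstar with hv
  have hpt : ∀ ω, ‖x - γ • g ω - xstar‖ ^ 2
      = ‖v‖ ^ 2 - 2 * γ * ⟪v, g ω⟫ + γ ^ 2 * ‖g ω‖ ^ 2 := by
    intro ω
    have h1 : x - γ • g ω - xstar = v - γ • g ω := by rw [hv]; abel
    rw [h1, @norm_sub_sq_real, real_inner_smul_right, norm_smul]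
    simp [abs_of_pos hγ, mul_pow]
    ring
  have hinner : Integrable (fun ω => ⟪v, g ω⟫) P := hint.const_inner v
  have hI : ∫ ω, ‖x - γ • g ω - xstar‖ ^ 2 ∂P
      = ‖v‖ ^ 2 - 2 * γ * ⟪v, gradient f x⟫ + γ ^ 2 * ∫ ω, ‖g ω‖ ^ 2 ∂P := by
    simp_rw [hpt]
    rw [integral_add, integral_sub, integral_const, integral_const_mul, integral_const_mul,
      integral_inner hint, hmean]
    · simp
    · exact integrable_const _
    · exact hinner.const_mul _
    · exact (integrable_const _).sub (hinner.const_mul _)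
    · exact hint2.const_mul _
  rw [hI]
  have hsc' : ⟪v, gradient f x⟫ ≥ f x - f xstar + μ / 2 * ‖v‖ ^ 2 := by
    have := hsc x xstar
    have h2 : xstar - x = -v := by rw [hv]; abel
    rw [h2] at this
    have h3 : ‖(-v : EuclideanSpace ℝ (Fin d))‖ = ‖v‖ := norm_neg v
    rw [inner_neg_right, h3] at this
    rw [real_inner_comm]
    linarith
  have hfs : 0 ≤ f x - f xstar := by linarith [hxstar x]
  nlinarith [sq_nonneg γ, mul_le_mul_of_nonneg_left hsecond (sq_nonneg γ)]
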